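/- Let n = qa with q ≥ 3 and a ≥ 4. If a = kq + 1 for some integer k ≥ 2, then the broadcast independence number of C⃗(n;1,a) equals a(q-1). If instead q = k(a-1) for some integer k ≥ 1, then the broadcast independence number of C⃗(n;1,a) equals (q+k)(a-2). -/

import Mathlib

/-- Arc relation of the oriented circulant graph C⃗(n;1,a): arcs u → u+1 and u → u+a (mod n). -/
def circArc (n : ℕ) (a : ℤ) (u v : ZMod n) : Prop :=
  v = u + 1 ∨ v = u + (a : ZMod n)

/-- There is a directed walk of length k from u to v in C⃗(n;1,a). -/
def circSteps (n : ℕ) (a : ℤ) (u v : ZMod n) (k : ℕ) : Prop :=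
  ∃ g : ℕ → ZMod n, g 0 = u ∧ g k = v ∧ ∀ i < k, circArc n a (g i) (g (i + 1))

/-- Directed distance: length of a shortest directed path from u to v. -/
noncomputable def circDist (n : ℕ) (a : ℤ) (u v : ZMod n) : ℕ :=
  sInf {k | circSteps n a u v k}

/-- Eccentricity of a vertex: maximum distance from it to any vertex. -/
noncomputable def circEcc (n : ℕ) (a : ℤ) (u : ZMod n) : ℕ :=
  sSup {d | ∃ v, d = circDist n a u v}

/-- Diameter: maximum eccentricity. -/
noncomputable def circDiam (n : ℕ) (a : ℤ) : ℕ :=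
  sSup {d | ∃ u, d = circEcc n a u}

/-- f is an independent broadcast on C⃗(n;1,a). -/
def IsIndepBroadcast (n : ℕ) (a : ℤ) (f : ZMod n → ℕ) : Prop :=
  (∀ v, f v ≤ circEcc n a v) ∧
  ∀ u v : ZMod n, u ≠ v → 0 < f u → 0 < f v → f u < circDist n a u v

/-- Cost of a broadcast: sum of its values over all vertices. -/
def circCost (n : ℕ) (f : ZMod n → ℕ) : ℕ :=
  ∑ i ∈ Finset.range n, f (i : ZMod n)

/-- The broadcast independence number of C⃗(n;1,a). -/
noncomputable def betaB (n : ℕ) (a : ℤ) : ℕ :=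
  sSup {c | ∃ f : ZMod n → ℕ, IsIndepBroadcast n a f ∧ c = circCost n f}

/-- helper distance function -/
def dfun (a x : ℕ) : ℕ := x / a + x % a

-- walk decomposition
lemma steps_succ {n : ℕ} {a : ℤ} {u v : ZMod n} {k : ℕ} (h : circSteps n a u v (k+1)) :
    ∃ w, circSteps n a u w k ∧ circArc n a w v := by
  obtain ⟨g, h0, hk, hs⟩ := h
  exact ⟨g k, ⟨g, h0, rfl, fun i hi => hs i (by omega)⟩, hk ▸ hs k (by omega)⟩

lemma steps_decomp {n : ℕ} {na : ℕ} {u v : ZMod n} {k : ℕ}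
    (h : circSteps n (na : ℤ) u v k) :
    ∃ σ τ : ℕ, σ + τ = k ∧ v = u + (σ : ZMod n) + (τ : ZMod n) * (na : ZMod n) := by
  induction k generalizing v with
  | zero =>
    obtain ⟨g, h0, hk, _⟩ := h
    exact ⟨0, 0, rfl, by simp [← h0, ← hk]⟩
  | succ k ih =>
    obtain ⟨w, hw, harc⟩ := steps_succ h
    obtain ⟨σ, τ, hst, hww⟩ := ih hw
    rcases harc with h1 | h2
    · exact ⟨σ + 1, τ, by omega, by rw [h1, hww]; push_cast; ring⟩
    · refine ⟨σ, τ + 1, by omega, ?_⟩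
      rw [h2, hww]; push_cast [Int.cast_natCast]; ring

lemma arith_key {q a n σ τ x : ℕ} (hn : n = q * a) (ha : 0 < a)
    (hx : x < n) (h : Nat.ModEq n (σ + τ * a) x) :
    x / a + x % a ≤ σ + τ := by
  have hq : 0 < q := by by_contra h0; simp [Nat.le_zero.mp (not_lt.mp h0)] at hn; omega
  have hxda := Nat.div_add_mod x a
  have hsda := Nat.div_add_mod σ a
  have htq : x / a < q := (Nat.div_lt_iff_lt_mul ha).2 (hn ▸ hx)
  have hmoda : σ % a = x % a := by
    have h2 : (σ + τ * a) % a = x % a := h.of_dvd ⟨q, by rw [hn, Nat.mul_comm]⟩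
    have h3 : (σ + τ * a) % a = σ % a := by simp [Nat.add_mul_mod_self_right]
    omega
  have h4 : Nat.ModEq (q * a) ((σ / a + τ) * a) (x / a * a) := by
    have h0 : Nat.ModEq n (a * (σ / a) + σ % a + τ * a) (a * (x / a) + x % a) := by
      rwa [hsda, hxda]
    rw [hmoda] at h0
    have h5 : Nat.ModEq n (a * (σ / a) + τ * a + x % a) (a * (x / a) + x % a) := by
      calc a * (σ / a) + τ * a + x % a = a * (σ / a) + x % a + τ * a := by ring
      _ ≡ a * (x / a) + x % a [MOD n] := h0
    have h6 := Nat.ModEq.add_right_cancel' (x % a) h5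
    calc (σ / a + τ) * a = a * (σ / a) + τ * a := by ring
    _ ≡ a * (x / a) [MOD q * a] := hn ▸ h6
    _ = x / a * a := by ring
  have h7 : Nat.ModEq q (σ / a + τ) (x / a) := Nat.ModEq.mul_right_cancel' (by omega) h4
  have hma : σ / a ≤ a * (σ / a) := Nat.le_mul_of_pos_left _ ha
  rcases lt_or_ge (σ / a + τ) q with hlt | hge
  · have heq : (σ / a + τ) % q = x / a % q := h7
    rw [Nat.mod_eq_of_lt hlt, Nat.mod_eq_of_lt htq] at heq
    omega
  · omega

lemma steps_canonical {n a : ℕ} [NeZero n] (u : ZMod n) (t s : ℕ) :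
    circSteps n (a : ℤ) u (u + ((t * a + s : ℕ) : ZMod n)) (t + s) := by
  refine ⟨fun i => u + (((min i t) * a + (i - t) : ℕ) : ZMod n), by simp, by
    dsimp only
    rw [min_eq_right (by omega), Nat.add_sub_cancel_left]
    , ?_⟩
  intro i hi
  dsimp only
  rcases lt_or_ge i t with h | h
  · right
    rw [show min (i+1) t = i + 1 from min_eq_left (by omega),
      show min i t = i from min_eq_left (by omega), Nat.sub_eq_zero_of_le (by omega),
      Nat.sub_eq_zero_of_le (by omega)]
    push_cast [Int.cast_natCast]
    ring
  · left
    rw [show min (i+1) t = t from min_eq_right (by omega),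
      show min i t = t from min_eq_right h]
    have h1 : i + 1 - t = (i - t) + 1 := by omega
    rw [h1]
    push_cast
    ring

lemma circDist_eq {n q a : ℕ} (hn : n = q * a) (hq : 0 < q) (ha : 0 < a) (u v : ZMod n) :
    circDist n (a : ℤ) u v = dfun a (v - u).val := by
  haveI : NeZero n := ⟨by subst hn; positivity⟩
  apply IsLeast.csInf_eq
  constructor
  · -- membership
    show circSteps n (a : ℤ) u v (dfun a (v - u).val)
    have hda := Nat.div_add_mod' (v - u).val a
    have := steps_canonical (n := n) (a := a) u ((v - u).val / a) ((v - u).val % a)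
    rw [hda, ZMod.natCast_zmod_val] at this
    simpa [dfun] using this
  · rintro k ⟨g, hg⟩
    obtain ⟨σ, τ, hστ, hv⟩ := steps_decomp ⟨g, hg⟩
    have hcast : (((v - u).val : ℕ) : ZMod n) = ((σ + τ * a : ℕ) : ZMod n) := by
      rw [ZMod.natCast_zmod_val]
      rw [hv]; push_cast; ring
    have hmod : Nat.ModEq n (σ + τ * a) (v - u).val :=
      ((ZMod.natCast_eq_natCast_iff _ _ _).1 hcast).symm
    have := arith_key hn ha (ZMod.val_lt (v - u)) hmod
    unfold dfun; omega

lemma circEcc_eq {n q a : ℕ} (hn : n = q * a) (hq : 0 < q) (ha : 0 < a) (u : ZMod n) :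
    circEcc n (a : ℤ) u = (q - 1) + (a - 1) := by
  haveI : NeZero n := ⟨by subst hn; positivity⟩
  have hnpos : 0 < n := hn ▸ Nat.mul_pos hq ha
  have haq : a ≤ q * a := Nat.le_mul_of_pos_left a hq
  have hn1 : n - 1 = (a - 1) + (q - 1) * a := by
    have : (q - 1) * a = q * a - a := Nat.sub_mul q 1 a ▸ by rw [one_mul]
    omega
  apply IsGreatest.csSup_eq
  constructor
  · refine ⟨u + ((n - 1 : ℕ) : ZMod n), ?_⟩
    rw [circDist_eq hn hq ha]
    have hval : (u + ((n - 1 : ℕ) : ZMod n) - u).val = n - 1 := by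
      rw [add_sub_cancel_left, ZMod.val_natCast, Nat.mod_eq_of_lt (by omega)]
    rw [hval, dfun, hn1]
    rw [Nat.add_mul_div_right _ _ ha, Nat.add_mul_mod_self_right,
      Nat.div_eq_of_lt (by omega), Nat.mod_eq_of_lt (by omega)]
    omega
  · rintro d ⟨v, rfl⟩
    rw [circDist_eq hn hq ha, dfun]
    have h1 : (v - u).val / a < q := (Nat.div_lt_iff_lt_mul ha).2 (hn ▸ ZMod.val_lt _)
    have h2 : (v - u).val % a < a := Nat.mod_lt _ ha
    omega

lemma dfun_le_self {a x : ℕ} (ha : 0 < a) : dfun a x ≤ x := by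
  have h1 := Nat.div_add_mod x a
  have h2 : x / a ≤ a * (x / a) := Nat.le_mul_of_pos_left _ ha
  unfold dfun; omega

lemma dfun_le {a x : ℕ} (ha : 0 < a) (hx : a ≤ x) : dfun a x + a ≤ x + 1 := by
  have h1 := Nat.div_add_mod x a
  have ht1 : 1 ≤ x / a := (Nat.one_le_div_iff ha).2 hx
  obtain ⟨a', rfl⟩ : ∃ a', a = 1 + a' := ⟨a - 1, by omega⟩
  obtain ⟨t', ht'⟩ : ∃ t', x / (1 + a') = 1 + t' := ⟨x / (1 + a') - 1, by omega⟩
  rw [ht'] at h1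
  have hexp : (1 + a') * (1 + t') = 1 + t' + a' + a' * t' := by ring
  unfold dfun; omega

lemma cost_eq_sum_univ {n : ℕ} [NeZero n] (f : ZMod n → ℕ) :
    circCost n f = ∑ u : ZMod n, f u := by
  rw [circCost]
  exact Finset.sum_nbij' (fun i => (i : ZMod n)) (fun u => u.val)
    (fun i _ => Finset.mem_univ _)
    (fun u _ => Finset.mem_range.2 u.val_lt)
    (fun i hi => ZMod.val_cast_of_lt (Finset.mem_range.1 hi))
    (fun u _ => ZMod.natCast_zmod_val u)
    (fun i _ => rfl)

lemma zone {n q a : ℕ} (hn : n = q * a) (hq : 2 ≤ q) (ha : 2 ≤ a) {f : ZMod n → ℕ}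
    (hf : IsIndepBroadcast n (a : ℤ) f) {u v : ZMod n} (hu : 0 < f u) (hv : 0 < f v)
    (hval : a ≤ (v - u).val) (hval2 : (v - u).val < a + f u) : False := by
  have hne : u ≠ v := by
    rintro rfl; rw [sub_self, ZMod.val_zero] at hval; omega
  have hd := hf.2 u v hne hu hv
  rw [circDist_eq hn (by omega) (by omega)] at hd
  have := dfun_le (a := a) (by omega) hval
  omega

lemma escape {n q a : ℕ} (hn : n = q * a) (hq : 2 ≤ q) (ha : 2 ≤ a) {f : ZMod n → ℕ}
    (hf : IsIndepBroadcast n (a : ℤ) f) (x : ZMod n)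
    (hcov : ∀ l : ℕ, ∃ u r, 0 < f u ∧ 1 ≤ r ∧ r ≤ f u ∧
      x + ((l * a : ℕ) : ZMod n) = u + (r : ZMod n)) : False := by
  haveI : NeZero n := ⟨by subst hn; positivity⟩
  have hecc : ∀ u, f u ≤ (q - 1) + (a - 1) := fun u =>
    le_trans (hf.1 u) (le_of_eq (circEcc_eq hn (by omega) (by omega) u))
  have h2a : 2 * a ≤ q * a := Nat.mul_le_mul_right a hq
  have h3 : (q - 2) * 1 ≤ (q - 2) * a := Nat.mul_le_mul_left _ (by omega)
  have h4 : (q - 2) * a = q * a - 2 * a := by rw [Nat.sub_mul]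
  have key : ∀ l : ℕ, ∃ u r, 0 < f u ∧ l + 1 ≤ r ∧ r ≤ f u ∧
      x + ((l * a : ℕ) : ZMod n) = u + (r : ZMod n) := by
    intro l
    induction l with
    | zero => exact hcov 0
    | succ l ih =>
      obtain ⟨u, r, hu, hr1, hrf, heq⟩ := ih
      obtain ⟨u', r', hu', hr1', hrf', heq'⟩ := hcov (l + 1)
      refine ⟨u', r', hu', ?_, hrf', heq'⟩
      have hr'r : r + 1 ≤ r' := by
        by_contra hc
        push_neg at hc
        have hc' : r' ≤ r := by omega
        have e2 : u' + (r' : ZMod n) = u + (r : ZMod n) + (a : ZMod n) := by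
          rw [← heq', show (((l+1) * a : ℕ) : ZMod n) = ((l * a : ℕ) : ZMod n) + (a : ZMod n)
            from by push_cast; ring, ← add_assoc, heq]
        have hval : u' - u = ((a + (r - r') : ℕ) : ZMod n) := by
          push_cast [Nat.cast_sub hc']
          rw [eq_sub_of_add_eq e2]
          ring
        have hvlt : a + (r - r') < n := by
          have := hecc u
          omega
        have hvv : (u' - u).val = a + (r - r') := by
          rw [hval, ZMod.val_natCast, Nat.mod_eq_of_lt hvlt]
        exact zone hn hq ha hf hu hu' (by omega) (by omega)
      omega
  obtain ⟨u, r, hu, hr1, hrf, _⟩ := key ((q - 1) + (a - 1))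
  have := hecc u
  omega

lemma upper_case1 {n q a : ℕ} (hn : n = q * a) (hq : 2 ≤ q) (ha : 2 ≤ a) {f : ZMod n → ℕ}
    (hf : IsIndepBroadcast n (a : ℤ) f) : circCost n f + a ≤ n := by
  haveI : NeZero n := ⟨by subst hn; positivity⟩
  have hnpos : 0 < n := hn ▸ by positivity
  have hqa1 : (q - 1) * 1 ≤ (q - 1) * a := Nat.mul_le_mul_left _ (by omega)
  have hqa2 : (q - 1) * a = q * a - a := by rw [Nat.sub_mul, one_mul]
  have hecc : ∀ u, f u ≤ (q - 1) + (a - 1) := fun u =>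
    le_trans (hf.1 u) (le_of_eq (circEcc_eq hn (by omega) (by omega) u))
  have hflt : ∀ u, f u < n := fun u => by have := hecc u; omega
  set S : Finset (ZMod n) := Finset.univ.filter (fun u => 0 < f u) with hS
  set C : Finset (ZMod n) :=
    S.biUnion (fun u => (Finset.Icc 1 (f u)).image (fun r : ℕ => u + (r : ZMod n))) with hC
  have hmemC : ∀ y : ZMod n, y ∈ C ↔ ∃ u r, 0 < f u ∧ 1 ≤ r ∧ r ≤ f u ∧ y = u + (r : ZMod n) := by
    intro y
    simp only [hC, hS, Finset.mem_biUnion, Finset.mem_filter, Finset.mem_univ, true_and,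
      Finset.mem_image, Finset.mem_Icc]
    constructor
    · rintro ⟨u, hu, r, ⟨h1, h2⟩, h3⟩; exact ⟨u, r, hu, h1, h2, h3.symm⟩
    · rintro ⟨u, r, hu, h1, h2, h3⟩; exact ⟨u, hu, r, ⟨h1, h2⟩, h3.symm⟩
  -- disjointness
  have hdisj : ∀ u ∈ S, ∀ v ∈ S, u ≠ v →
      Disjoint ((Finset.Icc 1 (f u)).image (fun r : ℕ => u + (r : ZMod n)))
        ((Finset.Icc 1 (f v)).image (fun r : ℕ => v + (r : ZMod n))) := by
    intro u huS v hvS huv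
    rw [Finset.disjoint_left]
    rintro y hy1 hy2
    simp only [Finset.mem_image, Finset.mem_Icc] at hy1 hy2
    obtain ⟨r, ⟨hr1, hr2⟩, hry⟩ := hy1
    obtain ⟨r', ⟨hr1', hr2'⟩, hry'⟩ := hy2
    have hu : 0 < f u := (Finset.mem_filter.1 huS).2
    have hv : 0 < f v := (Finset.mem_filter.1 hvS).2
    have hrr' : r ≠ r' := by
      rintro rfl
      exact huv (by have := hry.trans hry'.symm; exact add_right_cancel this)
    -- wlog via two symmetric cases
    have main : ∀ w w' : ZMod n, 0 < f w → 0 < f w' → ∀ s s' : ℕ, s' < s → s ≤ f w →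
        1 ≤ s' → w + (s : ZMod n) = w' + (s' : ZMod n) → False := by
      intro w w' hw hw' s s' hss' hsf hs1 heq
      have hwne : w ≠ w' := by
        rintro rfl
        have : (s : ZMod n) = (s' : ZMod n) := by
          have := heq; exact add_left_cancel this
        rw [ZMod.natCast_eq_natCast_iff'] at this
        rw [Nat.mod_eq_of_lt (lt_of_le_of_lt hsf (hflt w)),
          Nat.mod_eq_of_lt (by have := hflt w; omega)] at this
        omega
      have hd := hf.2 w w' hwne hw hw'
      rw [circDist_eq hn (by omega) (by omega)] at hd
      have hsub : w' - w = ((s - s' : ℕ) : ZMod n) := by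
        push_cast [Nat.cast_sub (le_of_lt hss')]
        rw [eq_sub_of_add_eq heq]
        ring
      have hval : (w' - w).val = s - s' := by
        rw [hsub, ZMod.val_natCast, Nat.mod_eq_of_lt (by have := hflt w; omega)]
      have := dfun_le_self (a := a) (x := s - s') (by omega)
      rw [hval] at hd
      omega
    rcases lt_or_gt_of_ne hrr' with h | h
    · exact main v u hv hu r' r h hr2' hr1 (hry'.trans hry.symm)
    · exact main u v hu hv r r' h hr2 hr1' (hry.trans hry'.symm)
  have hcardC : C.card = ∑ u ∈ S, f u := by
    rw [hC, Finset.card_biUnion hdisj]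
    apply Finset.sum_congr rfl
    intro u huS
    rw [Finset.card_image_of_injOn, Nat.card_Icc]
    · omega
    · intro r hr r' hr' hrr
      simp only [Finset.coe_Icc, Set.mem_Icc] at hr hr'
      have : (r : ZMod n) = (r' : ZMod n) := by
        have := hrr; simpa using add_left_cancel this
      rw [ZMod.natCast_eq_natCast_iff', Nat.mod_eq_of_lt (lt_of_le_of_lt hr.2 (hflt u)),
        Nat.mod_eq_of_lt (lt_of_le_of_lt hr'.2 (hflt u))] at this
      omega
  have hcost : circCost n f = C.card := by
    rw [cost_eq_sum_univ, hcardC, hS]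
    rw [Finset.sum_filter_of_ne]
    intro u _ hne
    simpa using Nat.pos_of_ne_zero (by omega)
  -- free vertices
  have hfree : ∀ ρ, ρ < a → ∃ y : ZMod n, y ∉ C ∧ y.val % a = ρ := by
    intro ρ hρ
    by_cases hex : ∀ l : ℕ, ((ρ : ZMod n) + ((l * a : ℕ) : ZMod n)) ∈ C
    · exfalso
      apply escape hn hq ha hf ((ρ : ZMod n))
      intro l
      obtain ⟨u, r, h1, h2, h3, h4⟩ := (hmemC _).1 (hex l)
      exact ⟨u, r, h1, h2, h3, h4⟩
    · push_neg at hex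
      obtain ⟨l, hl⟩ := hex
      refine ⟨(ρ : ZMod n) + ((l * a : ℕ) : ZMod n), hl, ?_⟩
      have hcast : ((ρ : ZMod n) + ((l * a : ℕ) : ZMod n)) = ((ρ + l * a : ℕ) : ZMod n) := by
        push_cast; ring
      rw [hcast, ZMod.val_natCast, Nat.mod_mod_of_dvd _ ⟨q, by rw [hn, Nat.mul_comm]⟩,
        Nat.add_mul_mod_self_right, Nat.mod_eq_of_lt hρ]
  choose y hy1 hy2 using hfree
  set Y : ℕ → ZMod n := fun ρ => if h : ρ < a then y ρ h else 0 with hY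
  have haleC : a ≤ (Finset.univ \ C).card := by
    have hra : a = (Finset.range a).card := (Finset.card_range a).symm
    rw [hra]
    apply Finset.card_le_card_of_injOn Y
    · intro ρ hρ
      have hρa := Finset.mem_range.1 hρ
      rw [Finset.mem_coe, Finset.mem_sdiff]
      refine ⟨Finset.mem_univ _, ?_⟩
      simp only [hY, dif_pos hρa]
      exact hy1 ρ hρa
    · intro ρ hρ ρ' hρ' hyy
      have hρa := Finset.mem_range.1 (by simpa using hρ)
      have hρa' := Finset.mem_range.1 (by simpa using hρ')
      have e1 : (Y ρ).val % a = ρ := by simp only [hY, dif_pos hρa]; exact hy2 ρ hρa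
      have e2 : (Y ρ').val % a = ρ' := by simp only [hY, dif_pos hρa']; exact hy2 ρ' hρa'
      rw [← e1, ← e2, hyy]
  have hcle : C.card ≤ Finset.univ.card := Finset.card_le_univ C
  have hsd : (Finset.univ \ C).card = Finset.univ.card - C.card :=
    Finset.card_sdiff_of_subset (Finset.subset_univ C)
  have hcu : (Finset.univ : Finset (ZMod n)).card = n := by
    rw [Finset.card_univ, ZMod.card]
  omega

lemma cost_eq_sum_supp {n : ℕ} [NeZero n] (f : ZMod n → ℕ) :
    circCost n f = ∑ u ∈ Finset.univ.filter (fun u => 0 < f u), f u := by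
  rw [cost_eq_sum_univ, Finset.sum_filter_of_ne]
  intro u _ hne
  omega

lemma ratio_ineq {a t s : ℕ} (ha : 3 ≤ a) (hs : s < a) :
    (a - 1) * (t + s) ≤ (a - 2) * (t * a + s) + (a - 1) := by
  obtain ⟨b, rfl⟩ : ∃ b, a = b + 3 := ⟨a - 3, by omega⟩
  have e1 : (b + 2) * (t + s) = b * t + b * s + 2 * t + 2 * s := by ring
  have e2 : (b + 1) * (t * (b + 3) + s) = t * (b * b) + 4 * (b * t) + b * s + 3 * t + s := by
    ring
  simp only [show b + 3 - 1 = b + 2 from rfl, show b + 3 - 2 = b + 1 from rfl]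
  omega

lemma upper_case2 {n q a k : ℕ} (hn : n = q * a) (hqk : q = k * (a - 1)) (hk : 1 ≤ k)
    (ha : 4 ≤ a) (hq3 : 3 ≤ q) {f : ZMod n → ℕ}
    (hf : IsIndepBroadcast n (a : ℤ) f) : circCost n f ≤ k * a * (a - 2) := by
  haveI : NeZero n := ⟨by subst hn; positivity⟩
  have hnpos : 0 < n := hn ▸ by positivity
  have hecc : ∀ u, f u ≤ (q - 1) + (a - 1) := fun u =>
    le_trans (hf.1 u) (le_of_eq (circEcc_eq hn (by omega) (by omega) u))
  set S : Finset (ZMod n) := Finset.univ.filter (fun u => 0 < f u) with hS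
  let gset : ZMod n → Set ℕ := fun u => {g | 0 < g ∧ u + (g : ZMod n) ∈ S}
  set gap : ZMod n → ℕ := fun u => sInf (gset u) with hgap
  have hgap_mem : ∀ u ∈ S, 0 < gap u ∧ u + ((gap u : ℕ) : ZMod n) ∈ S := by
    intro u hu
    exact Nat.sInf_mem (s := gset u)
      ⟨n, hnpos, by rw [ZMod.natCast_self, add_zero]; exact hu⟩
  have hgap_le : ∀ u ∈ S, gap u ≤ n := by
    intro u hu
    exact Nat.sInf_le (s := gset u) ⟨hnpos, by rw [ZMod.natCast_self, add_zero]; exact hu⟩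
  have hgap_min : ∀ u ∈ S, ∀ g : ℕ, 0 < g → g < gap u → u + (g : ZMod n) ∉ S := by
    intro u hu g hg hlt hmem
    have h5 : gap u ≤ g := Nat.sInf_le (s := gset u) ⟨hg, hmem⟩
    omega
  -- per-vertex bound
  have hmain : ∀ u ∈ S, (a - 1) * f u ≤ (a - 2) * gap u := by
    intro u hu
    rcases eq_or_lt_of_le (hgap_le u hu) with heq | hlt
    · -- gap u = n
      have hfu := hecc u
      obtain ⟨b, rfl⟩ : ∃ b, a = b + 4 := ⟨a - 4, by omega⟩
      obtain ⟨c, rfl⟩ : ∃ c, q = c + 3 := ⟨q - 3, by omega⟩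
      rw [heq, hn]
      have e1 : (b + 3) * ((c + 3 - 1) + (b + 4 - 1)) = b * b + b * c + 8 * b + 3 * c + 15 := by
        simp only [show c + 3 - 1 = c + 2 from rfl, show b + 4 - 1 = b + 3 from rfl]
        ring
      have e2 : (b + 2) * ((c + 3) * (b + 4)) =
          (b * b) * c + 3 * (b * b) + 6 * (b * c) + 18 * b + 8 * c + 24 := by ring
      have hle : (b + 3) * f u ≤ (b + 3) * ((c + 3 - 1) + (b + 4 - 1)) :=
        Nat.mul_le_mul_left _ hfu
      simp only [show b + 4 - 1 = b + 3 from rfl, show b + 4 - 2 = b + 2 from rfl] at *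
      omega
    · -- gap u < n
      obtain ⟨hg0, hgS⟩ := hgap_mem u hu
      have hvne : u + ((gap u : ℕ) : ZMod n) ≠ u := by
        intro h
        have : ((gap u : ℕ) : ZMod n) = 0 := by
          have := add_left_cancel (h.trans (add_zero u).symm); exact this
        rw [ZMod.natCast_eq_zero_iff] at this
        have := Nat.le_of_dvd hg0 this
        omega
      have hfu : 0 < f u := (Finset.mem_filter.1 hu).2
      have hfv : 0 < f (u + ((gap u : ℕ) : ZMod n)) := (Finset.mem_filter.1 hgS).2
      have hd := hf.2 u _ (Ne.symm hvne) hfu hfv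
      rw [circDist_eq hn (by omega) (by omega)] at hd
      have hval : (u + ((gap u : ℕ) : ZMod n) - u).val = gap u := by
        rw [add_sub_cancel_left, ZMod.val_natCast, Nat.mod_eq_of_lt hlt]
      rw [hval] at hd
      have hda := Nat.div_add_mod' (gap u) a
      have hri := ratio_ineq (a := a) (t := gap u / a) (s := gap u % a) (by omega)
        (Nat.mod_lt _ (by omega))
      rw [hda] at hri
      unfold dfun at hd
      have hmul : (a - 1) * (f u + 1) ≤ (a - 1) * (gap u / a + gap u % a) :=
        Nat.mul_le_mul_left _ (by omega)
      have hexp : (a - 1) * (f u + 1) = (a - 1) * f u + (a - 1) := by ring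
      omega
  -- sum of gaps ≤ n via disjoint intervals
  have hsum_gap : ∑ u ∈ S, gap u ≤ n := by
    have hdisj : ∀ u ∈ S, ∀ v ∈ S, u ≠ v →
        Disjoint ((Finset.range (gap u)).image (fun r : ℕ => u + (r : ZMod n)))
          ((Finset.range (gap v)).image (fun r : ℕ => v + (r : ZMod n))) := by
      intro u hu v hv huv
      rw [Finset.disjoint_left]
      rintro y hy1 hy2
      simp only [Finset.mem_image, Finset.mem_range] at hy1 hy2
      obtain ⟨r, hr, hry⟩ := hy1
      obtain ⟨r', hr', hry'⟩ := hy2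
      have main : ∀ w w' : ZMod n, w ∈ S → w' ∈ S → w ≠ w' → ∀ s s' : ℕ, s' < s →
          s < gap w → w + (s : ZMod n) = w' + (s' : ZMod n) → False := by
        intro w w' hw hw' hww' s s' hss' hsg heq
        apply hgap_min w hw (s - s') (by omega) (by omega)
        have : w + ((s - s' : ℕ) : ZMod n) = w' := by
          push_cast [Nat.cast_sub (le_of_lt hss')]
          rw [eq_sub_of_add_eq heq]
          ring
        rw [this]; exact hw'
      rcases lt_trichotomy r r' with h | h | h
      · exact main v u hv hu huv.symm r' r h hr' (hry'.trans hry.symm)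
      · subst h
        exact huv (add_right_cancel (hry.trans hry'.symm))
      · exact main u v hu hv huv r r' h hr (hry.trans hry'.symm)
    have hcard : ∀ u ∈ S, ((Finset.range (gap u)).image (fun r : ℕ => u + (r : ZMod n))).card
        = gap u := by
      intro u hu
      rw [Finset.card_image_of_injOn, Finset.card_range]
      intro r hr r' hr' hrr
      simp only [Finset.coe_range, Set.mem_Iio] at hr hr'
      have : (r : ZMod n) = (r' : ZMod n) := add_left_cancel hrr
      rw [ZMod.natCast_eq_natCast_iff',
        Nat.mod_eq_of_lt (lt_of_lt_of_le hr (hgap_le u hu)),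
        Nat.mod_eq_of_lt (lt_of_lt_of_le hr' (hgap_le u hu))] at this
      exact this
    calc ∑ u ∈ S, gap u
        = (S.biUnion (fun u => (Finset.range (gap u)).image (fun r : ℕ => u + (r : ZMod n)))).card := by
          rw [Finset.card_biUnion hdisj]
          exact (Finset.sum_congr rfl hcard).symm
      _ ≤ (Finset.univ : Finset (ZMod n)).card := Finset.card_le_univ _
      _ = n := by rw [Finset.card_univ, ZMod.card]
  -- combine
  have hsum : (a - 1) * circCost n f ≤ (a - 2) * n := by
    rw [cost_eq_sum_supp, ← hS, Finset.mul_sum]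
    calc ∑ u ∈ S, (a - 1) * f u ≤ ∑ u ∈ S, (a - 2) * gap u := Finset.sum_le_sum hmain
      _ = (a - 2) * ∑ u ∈ S, gap u := by rw [Finset.mul_sum]
      _ ≤ (a - 2) * n := Nat.mul_le_mul_left _ hsum_gap
  have hfinal : (a - 2) * n = (a - 1) * (k * a * (a - 2)) := by
    rw [hn, hqk]
    obtain ⟨b, rfl⟩ : ∃ b, a = b + 4 := ⟨a - 4, by omega⟩
    simp only [show b + 4 - 1 = b + 3 from rfl, show b + 4 - 2 = b + 2 from rfl]
    ring
  rw [hfinal] at hsum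
  exact Nat.le_of_mul_le_mul_left hsum (by omega)

lemma sum_multiples (c h m : ℕ) (hh : 0 < h) :
    ∑ i ∈ Finset.range (m * h), (if h ∣ i then c else 0) = m * c := by
  induction m with
  | zero => simp
  | succ m ih =>
    have hsplit : (m + 1) * h = m * h + h := by ring
    rw [hsplit, Finset.sum_range_add, ih]
    have hlast : ∑ i ∈ Finset.range h, (if h ∣ (m * h + i) then c else 0) = c := by
      rw [Finset.sum_eq_single_of_mem 0 (Finset.mem_range.2 hh)]
      · simp
      · intro j hj hj0
        rw [if_neg]
        intro hdvd
        have : h ∣ j := (Nat.dvd_add_right (dvd_mul_left h m)).1 hdvd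
        have := Nat.le_of_dvd (by omega) this
        have := Finset.mem_range.1 hj
        omega
    rw [hlast]; ring

lemma dfun_eq_sub {a x : ℕ} (ha : 0 < a) : dfun a x = x - (a - 1) * (x / a) := by
  have hda := Nat.div_add_mod x a
  have ht : x / a ≤ a * (x / a) := Nat.le_mul_of_pos_left _ ha
  have hsm : (a - 1) * (x / a) = a * (x / a) - 1 * (x / a) := Nat.sub_mul a 1 (x / a)
  have h1 : 1 * (x / a) = x / a := one_mul _
  unfold dfun; omega

lemma dfun_pos {a x : ℕ} (ha : 0 < a) (hx : 0 < x) : 0 < dfun a x := by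
  have hda := Nat.div_add_mod x a
  rcases Nat.eq_zero_or_pos (x % a) with h1 | h1
  · rcases Nat.eq_zero_or_pos (x / a) with h2 | h2
    · rw [h2, Nat.mul_zero] at hda; omega
    · exact Nat.lt_of_lt_of_le h2 (Nat.le_add_right _ _)
  · exact Nat.lt_of_lt_of_le h1 (Nat.le_add_left _ _)

lemma construction {n q a h : ℕ} (hn : n = q * a) (hq : 2 ≤ q) (ha : 2 ≤ a)
    (hh : 2 ≤ h) (hha : h ∣ (a - 1)) (hhn : h ∣ n) :
    IsIndepBroadcast n (a : ℤ) (fun x : ZMod n => if h ∣ x.val then h - 1 else 0) ∧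
    circCost n (fun x : ZMod n => if h ∣ x.val then h - 1 else 0) = (h - 1) * (n / h) := by
  haveI : NeZero n := ⟨by subst hn; positivity⟩
  have hnpos : 0 < n := hn ▸ by positivity
  have hha1 : h ≤ a - 1 := Nat.le_of_dvd (by omega) hha
  constructor
  · constructor
    · intro v
      rw [circEcc_eq hn (by omega) (by omega)]
      dsimp only
      split
      · omega
      · omega
    · intro u v huv hu hv
      dsimp only at hu hv
      have hdu : h ∣ u.val := by by_contra hc; simp [hc] at hu
      have hdv : h ∣ v.val := by by_contra hc; simp [hc] at hv
      rw [circDist_eq hn (by omega) (by omega)]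
      have hcast : (((v - u).val + u.val : ℕ) : ZMod n) = ((v.val : ℕ) : ZMod n) := by
        push_cast
        simp only [ZMod.natCast_zmod_val]
        ring
      have hmodn : Nat.ModEq n ((v - u).val + u.val) v.val :=
        (ZMod.natCast_eq_natCast_iff _ _ _).1 hcast
      have hmodh : Nat.ModEq h ((v - u).val + u.val) v.val := hmodn.of_dvd hhn
      have hdd : h ∣ (v - u).val := by
        have h1 : Nat.ModEq h ((v - u).val) ((v - u).val + u.val) := by
          have := Nat.ModEq.add_left ((v - u).val) ((Nat.modEq_zero_iff_dvd).2 hdu).symm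
          simpa using this
        have h2 : Nat.ModEq h ((v - u).val) 0 :=
          (h1.trans hmodh).trans ((Nat.modEq_zero_iff_dvd).2 hdv)
        exact (Nat.modEq_zero_iff_dvd).1 h2
      have hdvd_dfun : h ∣ dfun a ((v - u).val) := by
        rw [dfun_eq_sub (by omega)]
        exact Nat.dvd_sub hdd (Dvd.dvd.mul_right hha _)
      have hdpos : 0 < (v - u).val := by
        rcases Nat.eq_zero_or_pos ((v - u).val) with h0 | h0
        · exfalso
          apply huv
          have hvu : v - u = 0 := by rwa [ZMod.val_eq_zero] at h0
          exact (sub_eq_zero.1 hvu).symm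
        · exact h0
      have hdfpos := dfun_pos (a := a) (by omega) hdpos
      have := Nat.le_of_dvd hdfpos hdvd_dfun
      dsimp only
      rw [if_pos hdu]
      omega
  · rw [circCost]
    have hcong : ∀ i ∈ Finset.range n,
        (if h ∣ ((i : ZMod n)).val then h - 1 else 0) = (if h ∣ i then h - 1 else 0) := by
      intro i hi
      rw [ZMod.val_cast_of_lt (Finset.mem_range.1 hi)]
    rw [Finset.sum_congr rfl hcong]
    have hmn : n / h * h = n := Nat.div_mul_cancel hhn
    rw [← hmn, sum_multiples _ _ _ (by omega), Nat.mul_comm,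
      Nat.mul_div_cancel _ (show 0 < h by omega)]

theorem stmt18 (n a q : ℕ) (hn : n = q * a) (hq : 3 ≤ q) (ha : 4 ≤ a) :
    (∀ k : ℕ, 2 ≤ k → a = k * q + 1 → betaB n (a : ℤ) = a * (q - 1)) ∧
    (∀ k : ℕ, 1 ≤ k → q = k * (a - 1) → betaB n (a : ℤ) = (q + k) * (a - 2)) := by
  constructor
  · intro k hk hak
    have hcon := construction (n := n) (q := q) (a := a) (h := q) hn (by omega) (by omega)
      (by omega) ⟨k, by rw [Nat.mul_comm]; omega⟩ ⟨a, hn⟩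
    apply IsGreatest.csSup_eq
    constructor
    · refine ⟨_, hcon.1, ?_⟩
      rw [hcon.2, hn, Nat.mul_div_cancel_left a (by omega : 0 < q), Nat.mul_comm]
    · rintro c ⟨f, hf, rfl⟩
      have := upper_case1 hn (by omega) (by omega) hf
      have he : a * (q - 1) + a = a * q := by
        obtain ⟨q', rfl⟩ : ∃ q', q = q' + 3 := ⟨q - 3, by omega⟩
        simp only [show q' + 3 - 1 = q' + 2 from rfl]
        ring
      have he2 : q * a = a * q := Nat.mul_comm q a
      omega
  · intro k hk hqk
    have hna : n = (a - 1) * (k * a) := by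
      rw [hn, hqk]
      obtain ⟨b, rfl⟩ : ∃ b, a = b + 4 := ⟨a - 4, by omega⟩
      simp only [show b + 4 - 1 = b + 3 from rfl]
      ring
    have hqk' : (a - 1) ∣ n := ⟨k * a, hna⟩
    have hcon := construction (n := n) (q := q) (a := a) (h := a - 1) hn (by omega) (by omega)
      (by omega) dvd_rfl hqk'
    have hqka : q + k = k * a := by
      obtain ⟨b, rfl⟩ : ∃ b, a = b + 4 := ⟨a - 4, by omega⟩
      simp only [show b + 4 - 1 = b + 3 from rfl] at hqk
      rw [hqk]; ring
    have hdiv : n / (a - 1) = k * a := by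
      rw [hna, Nat.mul_div_cancel_left _ (by omega : 0 < a - 1)]
    apply IsGreatest.csSup_eq
    constructor
    · refine ⟨_, hcon.1, ?_⟩
      rw [hcon.2, hdiv, hqka, show a - 1 - 1 = a - 2 from by omega, Nat.mul_comm]
    · rintro c ⟨f, hf, rfl⟩
      have := upper_case2 hn hqk hk ha (by omega) hf
      rw [hqka]
      omega
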